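/- Let p be a prime, m ≥ 1, s ≥ 2, η a positive integer coprime to p, λ_0 a nonzero element of F_{p^m} such that x^η − λ_0 is irreducible over F_{p^m}, and let p^s − p^{s−1} + 1 ≤ i ≤ p^s − 1. If the code C_i(η, p^s, λ_0) is an optimal LRC, then η = 1 and either p = 2 and i = 2^{s−1} + 1, or i = p^s − 1. -/

import Mathlib

open Polynomial

variable {F : Type} [Field F] [Fintype F] [DecidableEq F]

/-- `d` is the minimum distance (minimum Hamming weight of a nonzero codeword) of `Cset`. -/
def minDistIs {n : ℕ} (Cset : Set (Fin n → F)) (d : ℕ) : Prop :=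
  IsLeast {w : ℕ | ∃ c ∈ Cset, c ≠ 0 ∧ hammingNorm c = w} d

/-- The `i`-th code symbol of `Cset` has locality `r`. -/
def symbolLocality {n : ℕ} (Cset : Set (Fin n → F)) (i : Fin n) (r : ℕ) : Prop :=
  ∃ I : Finset (Fin n), i ∉ I ∧ I.card ≤ r ∧
    ∃ f : ({x : Fin n // x ∈ I} → F) → F, ∀ c ∈ Cset, c i = f (fun j => c j.1)

/-- `Cset` has all-symbol locality `r`. -/
def hasAllSymbolLocality {n : ℕ} (Cset : Set (Fin n → F)) (r : ℕ) : Prop :=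
  ∀ i : Fin n, symbolLocality Cset i r

/-- `r` is the minimum locality of `Cset`. -/
def minLocalityIs {n : ℕ} (Cset : Set (Fin n → F)) (r : ℕ) : Prop :=
  IsLeast {r' : ℕ | hasAllSymbolLocality Cset r'} r

/-- The λ-constacyclic code of length `n` corresponding to the ideal generated by (the image of)
`g` in `F[x]/⟨x^n − λ⟩`, viewed as a set of vectors via the coefficient identification. -/
def codeOfGen (n : ℕ) (lam : F) (g : F[X]) : Set (Fin n → F) :=
  {c | (∑ j : Fin n, Polynomial.C (c j) * X ^ (j : ℕ)) ∈ Ideal.span {g, X ^ n - Polynomial.C lam}}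

/-- The code `C_i(η, p^s, λ₀)`: the λ-constacyclic code of length `η p^s`
generated by `(x^η − λ₀)^i`, where `λ = λ₀^{p^s}`. -/
def Ci (p η s i : ℕ) (lam0 : F) : Set (Fin (η * p ^ s) → F) :=
  codeOfGen (η * p ^ s) (lam0 ^ p ^ s) ((X ^ η - Polynomial.C lam0) ^ i)

/-- The code `C_{i,j}(2p^s, λ₀)` with `λ₀ = δ²`: the λ-constacyclic code of length `2 p^s`
generated by `(x − δ)^i (x + δ)^j`, where `λ = λ₀^{p^s}`. -/
def Cij (p s i j : ℕ) (δ : F) : Set (Fin (2 * p ^ s) → F) :=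
  codeOfGen (2 * p ^ s) ((δ ^ 2) ^ p ^ s) ((X - Polynomial.C δ) ^ i * (X + Polynomial.C δ) ^ j)

/-- `V_t = Π_j (t_j + 1)` over the base-`p` digits `t_j` of `t`. -/
def Vdig (p t : ℕ) : ℕ := ((Nat.digits p t).map (· + 1)).prod

/-- Ceiling division `⌈a / b⌉` of natural numbers. -/
def nceil (a b : ℕ) : ℕ := (a + b - 1) / b

/-- `Cset` is an optimal LRC: for its dimension `k`, minimum distance `d` and minimum
locality `r`, the Singleton-like bound `d = n − k − ⌈k/r⌉ + 2` is met with equality. -/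
def optimalLRC {n : ℕ} (Cset : Set (Fin n → F)) : Prop :=
  ∃ k d r : ℕ, Nat.card Cset = Fintype.card F ^ k ∧ minDistIs Cset d ∧
    minLocalityIs Cset r ∧ (d : ℤ) = (n : ℤ) - (k : ℤ) - (nceil k r : ℤ) + 2

/- ============================================================= -/
/- Auxiliary material -/

set_option linter.unusedSectionVars false
set_option linter.unusedVariables false
set_option maxHeartbeats 1600000

noncomputable def toPoly {n : ℕ} (c : Fin n → F) : F[X] :=
  ∑ j : Fin n, Polynomial.C (c j) * X ^ (j : ℕ)

lemma coeff_toPoly {n : ℕ} (c : Fin n → F) (a : ℕ) :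
    (toPoly c).coeff a = if h : a < n then c ⟨a, h⟩ else 0 := by
  unfold toPoly
  rw [finset_sum_coeff]
  simp only [C_mul_X_pow_eq_monomial, coeff_monomial]
  by_cases h : a < n
  · rw [dif_pos h, Finset.sum_eq_single (⟨a, h⟩ : Fin n)]
    · simp
    · intro b _ hb
      rw [if_neg]; intro hc; exact hb (by ext; simp [hc])
    · simp
  · rw [dif_neg h, Finset.sum_eq_zero]
    intro b _
    rw [if_neg]
    intro hc; exact h (hc ▸ b.isLt)

lemma toPoly_degree_lt {n : ℕ} (c : Fin n → F) : (toPoly c).degree < n := by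
  apply Polynomial.degree_lt_iff_coeff_zero _ _ |>.2
  intro a ha
  rw [coeff_toPoly, dif_neg]
  exact fun h => absurd (Nat.cast_le.mp ha) (by omega)

lemma toPoly_of_coeff {n : ℕ} (P : F[X]) (h : P.degree < n) :
    toPoly (fun j : Fin n => P.coeff j) = P := by
  ext a
  rw [coeff_toPoly]
  by_cases ha : a < n
  · simp [ha]
  · rw [dif_neg ha, eq_comm]
    exact Polynomial.coeff_eq_zero_of_degree_lt
      (lt_of_lt_of_le h (by exact_mod_cast Nat.le_of_not_lt ha))

lemma span_pair_of_dvd {g f : F[X]} (h : g ∣ f) :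
    Ideal.span {g, f} = Ideal.span ({g} : Set F[X]) := by
  have : ({g, f} : Set F[X]) = insert g {f} := rfl
  rw [this, Ideal.span_insert]
  rw [sup_eq_left, Ideal.span_le, Set.singleton_subset_iff]
  exact Ideal.mem_span_singleton.2 h

lemma mem_codeOfGen_iff {n : ℕ} {lam : F} {g : F[X]} (hdvd : g ∣ (X ^ n - Polynomial.C lam))
    (c : Fin n → F) : c ∈ codeOfGen n lam g ↔ g ∣ toPoly c := by
  unfold codeOfGen
  rw [Set.mem_setOf_eq, span_pair_of_dvd hdvd, Ideal.mem_span_singleton]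
  rfl

lemma zero_mem_codeOfGen {n : ℕ} {lam : F} {g : F[X]} : (0 : Fin n → F) ∈ codeOfGen n lam g := by
  unfold codeOfGen
  rw [Set.mem_setOf_eq]
  have : (∑ j : Fin n, Polynomial.C ((0 : Fin n → F) j) * X ^ (j : ℕ)) = 0 := by simp
  rw [this]
  exact Ideal.zero_mem _

lemma charF {p m : ℕ} (hp : p.Prime) (hm : 1 ≤ m) (hcard : Fintype.card F = p ^ m) :
    CharP F p := by
  have h2 := ringChar.charP F
  obtain ⟨n, hq, hc⟩ := FiniteField.card F (ringChar F)
  have : ringChar F ∣ p ^ m := by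
    rw [← hcard, hc]; exact dvd_pow_self _ (by exact_mod_cast n.2.ne')
  have := (Nat.Prime.dvd_of_dvd_pow hq this)
  have : ringChar F = p := (Nat.prime_dvd_prime_iff_eq hq hp).1 this
  rwa [this] at h2

lemma frob_pow {p : ℕ} (hp : Fact p.Prime) [CharP F p] (η t : ℕ) (lam0 : F) :
    (X ^ η - Polynomial.C lam0) ^ p ^ t = X ^ (η * p ^ t) - Polynomial.C (lam0 ^ p ^ t) := by
  rw [sub_pow_char_pow, ← pow_mul, map_pow]

lemma card_codeOfGen {n : ℕ} (hn : 0 < n) {lam : F} {g : F[X]} (hg : g.Monic)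
    (hdvd : g ∣ (X ^ n - Polynomial.C lam)) (hdeg : g.natDegree ≤ n) :
    Nat.card (codeOfGen n lam g) = Fintype.card F ^ (n - g.natDegree) := by
  set D := n - g.natDegree with hD
  have hg0 : g ≠ 0 := hg.ne_zero
  have hdlt : ∀ a : Fin D → F, (toPoly a * g).degree < n := by
    intro a
    · by_cases h0 : toPoly a = 0
      · rw [h0, zero_mul, degree_zero]
        exact WithBot.bot_lt_coe n
      · have hD0 : 0 < D := by
          by_contra hD0
          have : D = 0 := by omega
          have : toPoly a = 0 := by
            ext b
            rw [coeff_toPoly]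
            split
            · next hh => exact absurd hh (by omega)
            · rfl
          exact h0 this
        rw [degree_mul, degree_eq_natDegree h0, degree_eq_natDegree hg0,
          ← Nat.cast_add, Nat.cast_lt]
        have h1 : (toPoly a).natDegree < D := by
          have := toPoly_degree_lt a
          rw [degree_eq_natDegree h0, Nat.cast_lt] at this
          exact this
        omega
  have hmem : ∀ a : Fin D → F, (fun b : Fin n => (toPoly a * g).coeff b) ∈ codeOfGen n lam g := by
    intro a
    rw [mem_codeOfGen_iff hdvd]
    have : toPoly (fun b : Fin n => (toPoly a * g).coeff b) = toPoly a * g :=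
      toPoly_of_coeff _ (hdlt a)
    rw [this]
    exact Dvd.intro_left _ rfl
  let e : (Fin D → F) → codeOfGen n lam g := fun a => ⟨_, hmem a⟩
  have hbij : Function.Bijective e := by
    constructor
    · intro a a' h
      have h' : ∀ b : Fin n, (toPoly a * g).coeff b = (toPoly a' * g).coeff b :=
        fun b => congrFun (congrArg Subtype.val h) b
      have hpq : toPoly a * g = toPoly a' * g := by
        ext b
        by_cases hb : b < n
        · exact h' ⟨b, hb⟩
        · have hbn : (n : WithBot ℕ) ≤ (b : ℕ) := by
            exact_mod_cast Nat.le_of_not_lt hb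
          rw [Polynomial.coeff_eq_zero_of_degree_lt (lt_of_lt_of_le (hdlt a) hbn),
            Polynomial.coeff_eq_zero_of_degree_lt (lt_of_lt_of_le (hdlt a') hbn)]
      have := mul_right_cancel₀ hg0 hpq
      funext j
      have := congrArg (fun P => Polynomial.coeff P j) this
      simpa [coeff_toPoly] using this
    · rintro ⟨c, hc⟩
      rw [mem_codeOfGen_iff hdvd] at hc
      obtain ⟨q, hq⟩ := hc
      have hqdeg : q.degree < (D : ℕ) := by
        by_cases h0 : q = 0
        · rw [h0, degree_zero]; exact WithBot.bot_lt_coe _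
        · have htc : toPoly c ≠ 0 := by
            rw [hq]; exact mul_ne_zero hg0 h0
          have := toPoly_degree_lt c
          rw [hq, degree_mul, degree_eq_natDegree hg0, degree_eq_natDegree h0,
            ← Nat.cast_add, Nat.cast_lt] at this
          rw [degree_eq_natDegree h0, Nat.cast_lt]
          omega
      refine ⟨fun j : Fin D => q.coeff j, ?_⟩
      have hq' : toPoly (fun j : Fin D => q.coeff j) = q := toPoly_of_coeff q hqdeg
      apply Subtype.ext
      funext b
      show (toPoly _ * g).coeff b = c b
      rw [hq', mul_comm, ← hq, coeff_toPoly, dif_pos b.isLt]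
  rw [Nat.card_congr (Equiv.ofBijective e hbij).symm, Nat.card_eq_fintype_card,
    Fintype.card_fun, Fintype.card_fin]

section Loc

variable {p : ℕ} [hp : Fact p.Prime] [CharP F p] {s η i : ℕ} {lam0 : F}

lemma key_relation (hs : 1 ≤ s) (hη : 0 < η) (hlam0 : lam0 ≠ 0)
    (hi1 : p ^ s ≤ p ^ (s-1) + i) (hi2 : i ≤ p ^ s)
    (c : Fin (η * p ^ s) → F)
    (hc : c ∈ codeOfGen (η * p ^ s) (lam0 ^ p ^ s) ((X ^ η - Polynomial.C lam0) ^ i)) :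
    (∀ a : ℕ, a + η * p ^ (s-1) < η * p ^ s →
      (toPoly c).coeff a = lam0 ^ p ^ (s-1) * (toPoly c).coeff (a + η * p ^ (s-1))) ∧
    (∀ a : ℕ, η * p ^ s ≤ a + η * p ^ (s-1) → a < η * p ^ s →
      (toPoly c).coeff a = (lam0 ^ p ^ s)⁻¹ * lam0 ^ p ^ (s-1) *
        (toPoly c).coeff (a + η * p ^ (s-1) - η * p ^ s)) := by
  have hppos : 0 < p := hp.out.pos
  have hMpos : 0 < η * p ^ (s-1) := by positivity
  have hMltn : η * p ^ (s-1) < η * p ^ s := by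
    apply Nat.mul_lt_mul_left hη |>.2
    exact Nat.pow_lt_pow_right hp.out.one_lt (by omega)
  have hXg : X ^ (η * p ^ s) - Polynomial.C (lam0 ^ p ^ s)
      = (X ^ η - Polynomial.C lam0) ^ p ^ s := (frob_pow hp η s lam0).symm
  have hdvd : (X ^ η - Polynomial.C lam0) ^ i ∣ (X ^ (η * p ^ s) - Polynomial.C (lam0 ^ p ^ s)) := by
    rw [hXg]; exact pow_dvd_pow _ hi2
  rw [mem_codeOfGen_iff hdvd] at hc
  obtain ⟨A, hA⟩ := hc
  set Q : F[X] := (X ^ η - Polynomial.C lam0) ^ (p ^ (s-1) + i - p ^ s) * A with hQdef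
  have hPdeg : (toPoly c).degree < (η * p ^ s : ℕ) := toPoly_degree_lt c
  have keyeq : (X ^ (η * p ^ (s-1)) - Polynomial.C (lam0 ^ p ^ (s-1))) * (toPoly c)
      = (X ^ (η * p ^ s) - Polynomial.C (lam0 ^ p ^ s)) * Q := by
    have h1 : (X ^ (η * p ^ (s-1)) - Polynomial.C (lam0 ^ p ^ (s-1)) : F[X])
        = (X ^ η - Polynomial.C lam0) ^ p ^ (s-1) := (frob_pow hp η (s-1) lam0).symm
    rw [h1, hXg, hA, hQdef]
    rw [← mul_assoc, ← pow_add, ← mul_assoc, ← pow_add]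
    congr 2
    omega
  have hnz : (X ^ (η * p ^ s) - Polynomial.C (lam0 ^ p ^ s) : F[X]) ≠ 0 := by
    rw [hXg]
    exact pow_ne_zero _ (X_pow_sub_C_ne_zero (by positivity) _)
  have hQdeg : Q.degree < ((η * p ^ (s-1) : ℕ) : WithBot ℕ) := by
    by_cases hQ0 : Q = 0
    · rw [hQ0, degree_zero]; exact WithBot.bot_lt_coe _
    · have hP0 : toPoly c ≠ 0 := by
        intro h
        apply hQ0
        have := keyeq
        rw [h, mul_zero] at this
        exact (mul_eq_zero.1 this.symm).resolve_left hnz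
      have hXM : (X ^ (η * p ^ (s-1)) - Polynomial.C (lam0 ^ p ^ (s-1)) : F[X]) ≠ 0 :=
        X_pow_sub_C_ne_zero hMpos _
      have hnd := congrArg Polynomial.natDegree keyeq
      rw [Polynomial.natDegree_mul hXM hP0, Polynomial.natDegree_mul hnz hQ0,
        Polynomial.natDegree_X_pow_sub_C, Polynomial.natDegree_X_pow_sub_C] at hnd
      have hPnd : (toPoly c).natDegree < η * p ^ s := by
        rwa [Polynomial.degree_eq_natDegree hP0, Nat.cast_lt] at hPdeg
      rw [Polynomial.degree_eq_natDegree hQ0, Nat.cast_lt]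
      omega
  have coeffeq : ∀ a : ℕ,
      (if η * p ^ (s-1) ≤ a then (toPoly c).coeff (a - η * p ^ (s-1)) else 0)
        - lam0 ^ p ^ (s-1) * (toPoly c).coeff a
      = (if η * p ^ s ≤ a then Q.coeff (a - η * p ^ s) else 0)
        - lam0 ^ p ^ s * Q.coeff a := by
    intro a
    have h1 : (X ^ (η * p ^ (s-1)) - Polynomial.C (lam0 ^ p ^ (s-1))) * (toPoly c)
        = (toPoly c) * X ^ (η * p ^ (s-1)) - Polynomial.C (lam0 ^ p ^ (s-1)) * (toPoly c) := by
      ring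
    have h2 : (X ^ (η * p ^ s) - Polynomial.C (lam0 ^ p ^ s)) * Q
        = Q * X ^ (η * p ^ s) - Polynomial.C (lam0 ^ p ^ s) * Q := by ring
    have h3 := keyeq
    rw [h1, h2] at h3
    have := congrArg (fun G => Polynomial.coeff G a) h3
    simpa only [Polynomial.coeff_sub, Polynomial.coeff_mul_X_pow', Polynomial.coeff_C_mul]
      using this
  have hμ0 : lam0 ^ p ^ (s-1) ≠ (0:F) := pow_ne_zero _ hlam0
  have hlamne : lam0 ^ p ^ s ≠ (0:F) := pow_ne_zero _ hlam0
  constructor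
  · intro a ha
    have h := coeffeq (a + η * p ^ (s-1))
    rw [if_pos (by omega), if_neg (by omega), Nat.add_sub_cancel] at h
    have hQc : Q.coeff (a + η * p ^ (s-1)) = 0 :=
      Polynomial.coeff_eq_zero_of_degree_lt (lt_of_lt_of_le hQdeg (by exact_mod_cast by omega))
    rw [hQc] at h
    linear_combination h
  · intro a han ha
    have h1 := coeffeq (a + η * p ^ (s-1))
    rw [if_pos (by omega), if_pos (by omega), Nat.add_sub_cancel] at h1
    have hQc : Q.coeff (a + η * p ^ (s-1)) = 0 :=
      Polynomial.coeff_eq_zero_of_degree_lt (lt_of_lt_of_le hQdeg (by exact_mod_cast by omega))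
    have hPc : (toPoly c).coeff (a + η * p ^ (s-1)) = 0 :=
      Polynomial.coeff_eq_zero_of_degree_lt (lt_of_lt_of_le hPdeg (by exact_mod_cast by omega))
    rw [hQc, hPc] at h1
    have h2 := coeffeq (a + η * p ^ (s-1) - η * p ^ s)
    rw [if_neg (by omega), if_neg (by omega)] at h2
    have hQval : Q.coeff (a + η * p ^ (s-1) - η * p ^ s)
        = (lam0 ^ p ^ s)⁻¹ * lam0 ^ p ^ (s-1) *
          (toPoly c).coeff (a + η * p ^ (s-1) - η * p ^ s) := by
      field_simp
      linear_combination h2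
    have h3 : (toPoly c).coeff a = Q.coeff (a + η * p ^ (s-1) - η * p ^ s) := by
      linear_combination h1
    rw [h3, hQval]

lemma locality_one (hs : 1 ≤ s) (hη : 0 < η) (hlam0 : lam0 ≠ 0)
    (hi1 : p ^ s ≤ p ^ (s-1) + i) (hi2 : i ≤ p ^ s) :
    hasAllSymbolLocality
      (codeOfGen (η * p ^ s) (lam0 ^ p ^ s) ((X ^ η - Polynomial.C lam0) ^ i)) 1 := by
  have hppos : 0 < p := hp.out.pos
  have hMpos : 0 < η * p ^ (s-1) := by positivity
  have hMltn : η * p ^ (s-1) < η * p ^ s := by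
    apply Nat.mul_lt_mul_left hη |>.2
    exact Nat.pow_lt_pow_right hp.out.one_lt (by omega)
  intro b
  rcases lt_or_ge ((b : ℕ) + η * p ^ (s-1)) (η * p ^ s) with hb | hb
  · refine ⟨{⟨(b : ℕ) + η * p ^ (s-1), hb⟩}, ?_, by simp, ?_⟩
    · simp only [Finset.mem_singleton]
      intro h
      have := congrArg Fin.val h
      simp at this
      omega
    · refine ⟨fun v => lam0 ^ p ^ (s-1) *
        v ⟨⟨(b : ℕ) + η * p ^ (s-1), hb⟩, Finset.mem_singleton_self _⟩, ?_⟩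
      intro c hc
      have := (key_relation hs hη hlam0 hi1 hi2 c hc).1 b hb
      rw [coeff_toPoly, coeff_toPoly, dif_pos b.isLt, dif_pos hb] at this
      simpa using this
  · have hblt : (b : ℕ) < η * p ^ s := b.isLt
    have hplt : (b : ℕ) + η * p ^ (s-1) - η * p ^ s < η * p ^ s := by omega
    refine ⟨{⟨(b : ℕ) + η * p ^ (s-1) - η * p ^ s, hplt⟩}, ?_, by simp, ?_⟩
    · simp only [Finset.mem_singleton]
      intro h
      have := congrArg Fin.val h
      simp at this
      omega
    · refine ⟨fun v => (lam0 ^ p ^ s)⁻¹ * lam0 ^ p ^ (s-1) *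
        v ⟨⟨(b : ℕ) + η * p ^ (s-1) - η * p ^ s, hplt⟩, Finset.mem_singleton_self _⟩, ?_⟩
      intro c hc
      have := (key_relation hs hη hlam0 hi1 hi2 c hc).2 b hb hblt
      rw [coeff_toPoly, coeff_toPoly, dif_pos b.isLt, dif_pos hplt] at this
      simpa using this

end Loc

lemma card_support_sum_le {α : Type} (s : Finset α) (f : α → F[X]) :
    (∑ x ∈ s, f x).support.card ≤ ∑ x ∈ s, (f x).support.card := by
  classical
  induction s using Finset.cons_induction with
  | empty => simp
  | cons a s ha ih =>
    rw [Finset.sum_cons, Finset.sum_cons]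
    calc ((f a + ∑ x ∈ s, f x).support).card
        ≤ ((f a).support ∪ (∑ x ∈ s, f x).support).card :=
          Finset.card_le_card (Polynomial.support_add)
      _ ≤ (f a).support.card + (∑ x ∈ s, f x).support.card := Finset.card_union_le _ _
      _ ≤ _ := by omega

lemma card_support_binom_pow (D : ℕ) (w : F) (N : ℕ) :
    ((X ^ D - Polynomial.C w) ^ N).support.card ≤ N + 1 := by
  have h : (X ^ D - Polynomial.C w) ^ N
      = ∑ m ∈ Finset.range (N + 1),
        Polynomial.C ((-1) ^ (m + N) * w ^ (N - m) * (N.choose m : F)) * X ^ (D * m) := by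
    rw [sub_pow]
    apply Finset.sum_congr rfl
    intro m hm
    simp only [map_mul, map_pow, map_neg, map_one, Polynomial.C_eq_natCast, Polynomial.C_1]
    rw [← pow_mul]
    ring
  rw [h]
  calc (∑ m ∈ Finset.range (N + 1),
        Polynomial.C ((-1) ^ (m + N) * w ^ (N - m) * (N.choose m : F)) * X ^ (D * m)).support.card
      ≤ ∑ m ∈ Finset.range (N + 1),
        (Polynomial.C ((-1) ^ (m + N) * w ^ (N - m) * (N.choose m : F)) * X ^ (D * m)).support.card :=
        card_support_sum_le _ _
    _ ≤ ∑ m ∈ Finset.range (N + 1), 1 := by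
        apply Finset.sum_le_sum
        intro m _
        calc (Polynomial.C _ * X ^ (D * m)).support.card ≤ ({D * m} : Finset ℕ).card :=
              Finset.card_le_card (Polynomial.support_C_mul_X_pow' _ _)
          _ = 1 := Finset.card_singleton _
    _ = N + 1 := by simp

lemma card_support_special {p : ℕ} [hp : Fact p.Prime] [CharP F p]
    (η L k u : ℕ) (hu1 : 1 ≤ u) (hup : u ≤ p) (lam0 : F) :
    ((X ^ η - Polynomial.C lam0) ^ (p ^ L * (p ^ (k+1) - u))).support.card
      ≤ (p - u + 1) * p ^ k := by
  have hppos : 0 < p := hp.out.pos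
  have h1 : ((X ^ η - Polynomial.C lam0) ^ (p ^ L * (p ^ (k+1) - u)))
      = (X ^ (η * p ^ L) - Polynomial.C (lam0 ^ p ^ L)) ^ (p ^ (k+1) - u) := by
    rw [← frob_pow hp η L lam0, ← pow_mul]
  have hsplit : p ^ (k+1) - u = (p - u) + p * (p ^ k - 1) := by
    have h4 : p * (p ^ k - 1) = p ^ (k+1) - p := by
      rw [Nat.mul_sub, mul_one, pow_succ, mul_comm]
    have h5 : p ≤ p ^ (k+1) := Nat.le_self_pow (by omega) p
    omega
  rw [h1, hsplit, pow_add]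
  have h3 : ((X ^ (η * p ^ L) - Polynomial.C (lam0 ^ p ^ L)) ^ (p * (p ^ k - 1)) : F[X])
      = (X ^ (η * p ^ L * p) - Polynomial.C ((lam0 ^ p ^ L) ^ p)) ^ (p ^ k - 1) := by
    rw [pow_mul]
    congr 1
    have := frob_pow hp (η * p ^ L) 1 (lam0 ^ p ^ L)
    rwa [pow_one] at this
  rw [h3]
  calc ((X ^ (η * p ^ L) - Polynomial.C (lam0 ^ p ^ L)) ^ (p - u) *
        (X ^ (η * p ^ L * p) - Polynomial.C ((lam0 ^ p ^ L) ^ p)) ^ (p ^ k - 1)).support.card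
      ≤ ((X ^ (η * p ^ L) - Polynomial.C (lam0 ^ p ^ L)) ^ (p - u)).support.card *
        ((X ^ (η * p ^ L * p) - Polynomial.C ((lam0 ^ p ^ L) ^ p)) ^ (p ^ k - 1)).support.card :=
        Polynomial.card_support_mul_le
    _ ≤ ((p - u) + 1) * ((p ^ k - 1) + 1) :=
        Nat.mul_le_mul (card_support_binom_pow _ _ _) (card_support_binom_pow _ _ _)
    _ = (p - u + 1) * p ^ k := by
        congr 1
        have : 1 ≤ p ^ k := Nat.one_le_pow _ _ hppos
        omega

lemma arith_ineq (t X B u : ℤ) (ht : 1 ≤ t) (hX : 2 ≤ X) (hB : 1 ≤ B) (hu : 1 ≤ u) :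
    (t + 1) * X + 2 * (u + 1) * B ≤ (u + t) * X * B + 4 := by
  nlinarith [mul_nonneg (by linarith : (0:ℤ) ≤ B - 1)
      (by nlinarith : (0:ℤ) ≤ (u + t) * X - 2 * (u + 1)),
    mul_nonneg (by linarith : (0:ℤ) ≤ u - 1) (by linarith : (0:ℤ) ≤ X - 2)]

lemma arith_eq (t X B u j : ℤ) (ht : 1 ≤ t) (hX : 2 ≤ X) (hB : 1 ≤ B) (hu : 1 ≤ u)
    (hj : 2*j ≤ 2*(u+1)*B - 2) (heq : (t+1)*X + 2*j = (u+t)*X*B + 2) :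
    (B - 1) * ((u+t)*X - 2*(u+1)) = 0 ∧ (u-1)*(X-2) = 0 ∧ 2*j = 2*(u+1)*B - 2 := by
  have h1 : (0:ℤ) ≤ (B - 1) * ((u + t) * X - 2 * (u + 1)) :=
    mul_nonneg (by linarith) (by nlinarith)
  have h2 : (0:ℤ) ≤ (u - 1) * (X - 2) := mul_nonneg (by linarith) (by linarith)
  have key : (B - 1) * ((u+t)*X - 2*(u+1)) + (u-1)*(X-2) = 2*j + 2 - 2*(u+1)*B := by
    ring_nf; linarith [heq]
  refine ⟨by nlinarith, by nlinarith, by nlinarith⟩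

lemma aux_double (a b : ℤ) (h : a + 1 ≤ b) : 2*a ≤ 2*b - 2 := by omega

lemma final_arith (pz t Xp B u j ps ez : ℤ)
    (hp2 : 2 ≤ pz) (ht1 : 1 ≤ t) (hX : 2 ≤ Xp) (hXP : pz ≤ Xp) (hB : 1 ≤ B) (hu : 1 ≤ u)
    (hut : u + t = pz)
    (hfull : (u + t) * Xp * B = ps) (hj : 2*j ≤ 2*(u+1)*B - 2) (hjps : 2*j + 2 ≤ ps)
    (hez : 1 ≤ ez)
    (hchain1 : ez * (ps - 2*j) + 2 ≤ (t+1) * Xp) :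
    ez = 1 ∧ ((B = 1 ∧ j = 1) ∨ (pz = 2 ∧ Xp = 2 ∧ j = 2*B - 1)) := by
  have hA := arith_ineq t Xp B u ht1 hX hB hu
  have hchain2 : (t+1)*Xp + 2*j ≤ (u+t)*Xp*B + 2 := by linarith
  have hS : 2 ≤ ps - 2*j := by linarith
  have hez1 : ez = 1 := by
    by_contra hne
    have h2 : 2 ≤ ez := by omega
    have h3 : 2 * (ps - 2*j) ≤ ez * (ps - 2*j) :=
      mul_le_mul_of_nonneg_right h2 (by linarith)
    linarith
  refine ⟨hez1, ?_⟩
  rw [hez1] at hchain1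
  have heqc : (t+1)*Xp + 2*j = (u+t)*Xp*B + 2 := by linarith
  obtain ⟨hz1, hz2, hz3⟩ := arith_eq t Xp B u j ht1 hX hB hu hj heqc
  have hu1 : u = 1 := by
    rcases mul_eq_zero.1 hz2 with h | h
    · omega
    · omega
  rcases mul_eq_zero.1 hz1 with h | h
  · left
    have hB1 : B = 1 := by omega
    constructor
    · exact hB1
    · rw [hB1, hu1] at hz3
      omega
  · right
    rw [hu1] at h hz3
    have hpt : 1 + t = pz := by omega
    have h4 : pz * Xp = 4 := by rw [← hpt]; linarith
    have hXle : Xp ≤ 2 := by nlinarith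
    have hXp2' : Xp = 2 := by omega
    refine ⟨by omega, hXp2', by omega⟩

/-- Suppose `x^η − λ₀` is irreducible over `F_{p^m}`, `s ≥ 2` and
`p^s − p^{s−1} + 1 ≤ i ≤ p^s − 1`. If `C_i(η, p^s, λ₀)` is an optimal LRC, then `η = 1` and
either `p = 2` and `i = 2^{s−1} + 1`, or `i = p^s − 1`. -/
theorem stmt19 {p m : ℕ} (hp : p.Prime) (hm : 1 ≤ m)
    {F : Type} [Field F] [Fintype F] [DecidableEq F] (hcard : Fintype.card F = p ^ m)
    (s : ℕ) (hs : 2 ≤ s) (η : ℕ) (hη : 0 < η) (hcop : Nat.Coprime η p)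
    (lam0 : F) (hlam0 : lam0 ≠ 0) (hirr : Irreducible (X ^ η - Polynomial.C lam0))
    (i : ℕ) (hi1 : p ^ s - p ^ (s - 1) + 1 ≤ i) (hi2 : i ≤ p ^ s - 1)
    (hopt : optimalLRC (Ci p η s i lam0)) :
    η = 1 ∧ ((p = 2 ∧ i = 2 ^ (s - 1) + 1) ∨ i = p ^ s - 1) := by
  haveI hpf : Fact p.Prime := ⟨hp⟩
  haveI : CharP F p := charF hp hm hcard
  have hppos : 0 < p := hp.pos
  have hp2 : 2 ≤ p := hp.two_le
  -- basic powers
  have hpow1 : p ^ (s-1) * p = p ^ s := by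
    rw [← pow_succ]
    congr 1
    omega
  have hps1pos : 0 < p ^ (s-1) := by positivity
  have hpspos : 0 < p ^ s := by positivity
  have h2ps : 2 * p ^ (s-1) ≤ p ^ s := by
    have := Nat.mul_le_mul_left (p ^ (s-1)) hp2
    omega
  -- j
  set j := p ^ s - i with hjdef
  have hij : i + j = p ^ s := by omega
  have hj1 : 1 ≤ j := by omega
  have hj2 : j < p ^ (s-1) := by omega
  have hjne : j ≠ 0 := by omega
  -- L, B, u, k, X
  set L := Nat.log p j with hLdef
  set B := p ^ L with hBdef
  have hBpos : 0 < B := by positivity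
  have hBj : B ≤ j := Nat.pow_log_le_self p hjne
  have hjpB : j < B * p := by
    have := Nat.lt_pow_succ_log_self (by omega : 1 < p) j
    rwa [pow_succ] at this
  have hLs : L < s - 1 := Nat.log_lt_of_lt_pow hjne hj2
  set u := j / B with hudef
  have hu1 : 1 ≤ u := (Nat.one_le_div_iff hBpos).2 hBj
  have huB : u * B ≤ j := by
    rw [hudef]; exact Nat.div_mul_le_self j B
  have hjuB : j < (u + 1) * B := by
    have h1 : B * u + j % B = j := by rw [hudef]; exact Nat.div_add_mod j B
    have h2 := Nat.mod_lt j hBpos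
    have h3 : (u + 1) * B = B * u + B := by ring
    omega
  have hup : u ≤ p - 1 := by
    have h4 : u < p := by
      rw [hudef]
      exact (Nat.div_lt_iff_lt_mul hBpos).2 (by rw [mul_comm]; exact hjpB)
    omega
  set k := s - 1 - L with hkdef
  have hk1 : 1 ≤ k := by omega
  set Xp := p ^ k with hXpdef
  have hXpP : p ≤ Xp := by
    calc p = p ^ 1 := (pow_one p).symm
    _ ≤ p ^ k := Nat.pow_le_pow_right hppos hk1
  have hXp2 : 2 ≤ Xp := le_trans hp2 hXpP
  have hfull : B * (p * Xp) = p ^ s := by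
    rw [hBdef, hXpdef, ← pow_succ', ← pow_add]
    congr 1
    omega
  -- the codeword
  set e := p ^ s - u * B with hedef
  have hie : i ≤ e := by omega
  have helt : e < p ^ s := by
    have : 1 ≤ u * B := Nat.mul_le_mul hu1 hBpos
    omega
  have heform : e = p ^ L * (p ^ (k+1) - u) := by
    rw [Nat.mul_sub]
    have h1 : p ^ L * p ^ (k+1) = p ^ s := by
      rw [← pow_add]
      congr 1
      omega
    have h2 : p ^ L * u = u * B := by rw [hBdef, mul_comm]
    omega
  set cw : F[X] := (X ^ η - Polynomial.C lam0) ^ e with hcwdef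
  have hcwmonic : cw.Monic := (monic_X_pow_sub_C lam0 (by omega)).pow e
  have hcwnd : cw.natDegree = e * η := by
    rw [hcwdef, Polynomial.Monic.natDegree_pow (monic_X_pow_sub_C lam0 (by omega)),
      Polynomial.natDegree_X_pow_sub_C]
  have hcwndlt : cw.natDegree < η * p ^ s := by
    rw [hcwnd, mul_comm]
    exact Nat.mul_lt_mul_left hη |>.2 helt
  have hcwdeg : cw.degree < (η * p ^ s : ℕ) := by
    rw [Polynomial.degree_eq_natDegree hcwmonic.ne_zero, Nat.cast_lt]
    exact hcwndlt
  set cvec : Fin (η * p ^ s) → F := fun b => cw.coeff b with hcvecdef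
  have hcvecpoly : toPoly cvec = cw := toPoly_of_coeff cw hcwdeg
  have hXg : X ^ (η * p ^ s) - Polynomial.C (lam0 ^ p ^ s)
      = (X ^ η - Polynomial.C lam0) ^ p ^ s := (frob_pow hpf η s lam0).symm
  have hipows : i ≤ p ^ s := by omega
  have hdvd : (X ^ η - Polynomial.C lam0) ^ i
      ∣ (X ^ (η * p ^ s) - Polynomial.C (lam0 ^ p ^ s)) := by
    rw [hXg]; exact pow_dvd_pow _ hipows
  have hcvecmem : cvec ∈ Ci p η s i lam0 := by
    show cvec ∈ codeOfGen (η * p ^ s) (lam0 ^ p ^ s) ((X ^ η - Polynomial.C lam0) ^ i)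
    rw [mem_codeOfGen_iff hdvd, hcvecpoly, hcwdef]
    exact pow_dvd_pow _ hie
  have hcveclead : cvec ⟨e * η, by rw [← hcwnd]; exact hcwndlt⟩ = 1 := by
    rw [hcvecdef]
    simp only
    rw [← hcwnd, hcwmonic.coeff_natDegree]
  have hcvecne : cvec ≠ 0 := by
    intro h
    have h1 : cvec ⟨e * η, by rw [← hcwnd]; exact hcwndlt⟩ = 0 := by rw [h]; rfl
    rw [hcveclead] at h1
    exact one_ne_zero h1
  -- weight bound
  have hwt : hammingNorm cvec ≤ (p - u + 1) * Xp := by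
    have hsupp : ((X ^ η - Polynomial.C lam0) ^ (p ^ L * (p ^ (k+1) - u)) : F[X]).support.card
        ≤ (p - u + 1) * p ^ k :=
      card_support_special η L k u hu1 (by omega) lam0
    rw [← heform] at hsupp
    calc hammingNorm cvec ≤ cw.support.card := by
          unfold hammingNorm
          refine Finset.card_le_card_of_injOn (fun b => (b : ℕ)) ?_ ?_
          · intro b hb
            simp only [Finset.mem_filter, Finset.mem_univ, true_and] at hb
            rw [Finset.mem_coe, Polynomial.mem_support_iff]
            exact (Finset.mem_filter.1 (Finset.mem_coe.1 hb)).2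
          · intro x _ y _ hxy
            exact Fin.val_injective hxy
      _ ≤ (p - u + 1) * p ^ k := hsupp
  -- extract data from optimality
  obtain ⟨k₀, d, r, hcardC, hd, hr, heq⟩ := hopt
  -- dimension
  have hdegg : ((X ^ η - Polynomial.C lam0) ^ i).natDegree = i * η := by
    rw [Polynomial.Monic.natDegree_pow (monic_X_pow_sub_C lam0 (by omega)),
      Polynomial.natDegree_X_pow_sub_C]
  have hik : i * η ≤ η * p ^ s := by
    rw [mul_comm]
    exact Nat.mul_le_mul_left η hipows
  have hcC : Nat.card (Ci p η s i lam0 : Set (Fin (η * p ^ s) → F))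
      = Fintype.card F ^ (η * p ^ s - i * η) := by
    have := card_codeOfGen (F := F) (n := η * p ^ s) (by positivity)
      ((monic_X_pow_sub_C lam0 (by omega : η ≠ 0)).pow i) hdvd (by rw [hdegg]; exact hik)
    rw [hdegg] at this
    exact this
  have hk₀ : k₀ = η * j := by
    have h1 : Fintype.card F ^ k₀ = Fintype.card F ^ (η * p ^ s - i * η) := by
      rw [← hcardC, hcC]
    have h2 : 2 ≤ Fintype.card F := by
      rw [hcard]
      calc 2 ≤ p := hp2
      _ = p ^ 1 := (pow_one p).symm
      _ ≤ p ^ m := Nat.pow_le_pow_right hppos hm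
    have h3 := Nat.pow_right_injective h2 h1
    have h4 : η * p ^ s = η * i + η * j := by rw [← Nat.mul_add, hij]
    have h5 : i * η = η * i := mul_comm i η
    omega
  -- locality is 1
  have hloc1 : hasAllSymbolLocality (Ci p η s i lam0) 1 := by
    show hasAllSymbolLocality
      (codeOfGen (η * p ^ s) (lam0 ^ p ^ s) ((X ^ η - Polynomial.C lam0) ^ i)) 1
    exact locality_one (by omega) hη hlam0 (by omega) hipows
  have hrle : r ≤ 1 := hr.2 hloc1
  have hrne : r ≠ 0 := by
    intro h0
    have hall := hr.1
    rw [h0] at hall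
    obtain ⟨I, hbI, hIcard, f, hf⟩ := hall ⟨e * η, by rw [← hcwnd]; exact hcwndlt⟩
    have hIempty : I = ∅ := Finset.card_eq_zero.1 (by omega)
    have h1 := hf cvec hcvecmem
    have h2 := hf 0 zero_mem_codeOfGen
    have h3 : (fun jj : {x : Fin (η * p ^ s) // x ∈ I} => cvec jj.1)
        = (fun jj : {x : Fin (η * p ^ s) // x ∈ I} => (0 : Fin (η * p ^ s) → F) jj.1) := by
      funext jj
      obtain ⟨x, hx⟩ := jj
      rw [hIempty] at hx
      exact absurd hx (Finset.notMem_empty _)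
    rw [h3, ← h2] at h1
    rw [hcveclead] at h1
    simp at h1
  have hr1 : r = 1 := by omega
  -- distance value
  have hdle0 : d ≤ hammingNorm cvec := hd.2 ⟨cvec, hcvecmem, hcvecne, rfl⟩
  have hdle : d ≤ (p - u + 1) * Xp := le_trans hdle0 hwt
  have hnceil : nceil k₀ 1 = k₀ := by
    unfold nceil
    omega
  rw [hr1, hnceil, hk₀] at heq
  have hjps : 2 * j + 2 ≤ p ^ s := by omega
  -- d = η * (p^s - 2j) + 2 as integers
  have heqd : (d : ℤ) = (η : ℤ) * ((p:ℤ) ^ s - 2 * j) + 2 := by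
    have hcast : ((η * p ^ s : ℕ) : ℤ) = (η:ℤ) * (p:ℤ)^s := by push_cast; ring
    have hcast2 : ((η * j : ℕ) : ℤ) = (η:ℤ) * (j:ℤ) := by push_cast; ring
    rw [hcast, hcast2] at heq
    rw [heq]; ring
  -- set integer variables
  have ht1 : (1:ℤ) ≤ (p : ℤ) - u := by
    have h4 : u + 1 ≤ p := by omega
    have h5 : (u:ℤ) + 1 ≤ (p:ℤ) := by exact_mod_cast h4
    omega
  have hWcast : (((p - u + 1) * Xp : ℕ) : ℤ) = (((p:ℤ) - u) + 1) * (Xp:ℤ) := by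
    push_cast [Nat.cast_sub (by omega : u ≤ p)]
    ring
  have hfullZ : ((u:ℤ) + ((p:ℤ) - u)) * (Xp:ℤ) * (B:ℤ) = ((p:ℤ))^s := by
    have h6 : ((B * (p * Xp) : ℕ) : ℤ) = (((p ^ s : ℕ)) : ℤ) := by exact_mod_cast hfull
    push_cast at h6
    linear_combination h6
  have hjZ : 2 * (j:ℤ) ≤ 2 * ((u:ℤ)+1) * (B:ℤ) - 2 := by
    have h7 : j + 1 ≤ (u + 1) * B := hjuB
    have h8 : (j:ℤ) + 1 ≤ ((u:ℤ)+1) * (B:ℤ) := by exact_mod_cast h7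
    have h9 := aux_double (j:ℤ) (((u:ℤ)+1) * (B:ℤ)) h8
    have h10 : 2*(((u:ℤ)+1)*(B:ℤ)) = 2*((u:ℤ)+1)*(B:ℤ) := by ring
    rw [h10] at h9
    exact h9
  have hjpsZ : 2 * (j:ℤ) + 2 ≤ ((p:ℤ))^s := by exact_mod_cast hjps
  have hchain1 : (η:ℤ) * (((p:ℤ))^s - 2*(j:ℤ)) + 2 ≤ (((p:ℤ) - u) + 1) * (Xp:ℤ) := by
    rw [← heqd, ← hWcast]
    exact_mod_cast hdle
  obtain ⟨hez1, hcases⟩ := final_arith (p:ℤ) ((p:ℤ) - (u:ℤ)) (Xp:ℤ) (B:ℤ) (u:ℤ) (j:ℤ)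
    (((p:ℤ))^s) (η:ℤ)
    (by exact_mod_cast hp2) ht1 (by exact_mod_cast hXp2) (by exact_mod_cast hXpP)
    (by exact_mod_cast hBpos) (by exact_mod_cast hu1) (by ring) hfullZ hjZ hjpsZ
    (by exact_mod_cast hη) hchain1
  have hη1 : η = 1 := by exact_mod_cast hez1
  refine ⟨hη1, ?_⟩
  rcases hcases with ⟨hB1, hj1'⟩ | ⟨hpz2, hXp2'', hjB2⟩
  · right
    have : j = 1 := by exact_mod_cast hj1'
    omega
  · have hp2' : p = 2 := by exact_mod_cast hpz2
    have hXpn : Xp = 2 := by exact_mod_cast hXp2''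
    have hkk : k = 1 := by
      rw [hp2'] at hXpdef
      have : (2:ℕ) ^ k = 2 ^ 1 := by rw [← hXpdef, hXpn, pow_one]
      exact Nat.pow_right_injective (le_refl 2) this
    have hL : L = s - 2 := by omega
    have hB2 : B = 2 ^ (s - 2) := by rw [hBdef, hL, hp2']
    have h2s1 : 2 ^ (s - 2) * 2 = 2 ^ (s-1) := by
      rw [← pow_succ]
      congr 1
      omega
    have hjval : j = 2 ^ (s-1) - 1 := by
      have h8 : (j:ℤ) = 2 * (B:ℤ) - 1 := hjB2
      have h9 : ((2 * B : ℕ) : ℤ) = 2 * (B:ℤ) := by push_cast; ring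
      have h10 : j + 1 = 2 * B := by exact_mod_cast by omega
      have h11 : 2 * B = 2 ^ (s-1) := by
        rw [hB2]
        omega
      omega
    left
    refine ⟨hp2', ?_⟩
    rw [hp2'] at hij
    have h2s : 2 ^ (s-1) * 2 = 2 ^ s := by
      rw [← pow_succ]
      congr 1
      omega
    have h1 : (1:ℕ) ≤ 2^(s-1) := Nat.one_le_pow _ _ (by omega)
    omega
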